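/- arXiv:1711.02437 — 2 statements merged into one kernel-verified Lean document; each statement's English description precedes it below -/
import Mathlib

section
/- Let $v_\ell, c_\ell > 0$ for $\ell = 0, \dots, L$ and $p > 0$. Among positive reals $N_0, \dots, N_L$ subject to the variance constraint $\sum_{\ell=0}^L N_\ell^{-p} v_\ell \le V$, the total cost $\sum_{\ell=0}^L N_\ell c_\ell$ is minimized by $N_\ell = (\lambda p\, v_\ell / c_\ell)^{1/(p+1)}$ for a suitable Lagrange multiplier $\lambda > 0$, and the minimal cost equals $V^{-1/p} \left( \sum_{\ell=0}^L (c_\ell^p v_\ell)^{1/(p+1)} \right)^{(p+1)/p}$. -/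
open Finset

private lemma rpow_log_eq {x y : ℝ} (hx : 0 < x) (hy : 0 < y) (h : Real.log x = Real.log y) :
    x = y := by rw [← Real.exp_log hx, ← Real.exp_log hy, h]

private lemma keyA {p S V vv cc : ℝ} (hp : 0 < p) (hS : 0 < S) (hV : 0 < V)
    (hvv : 0 < vv) (hcc : 0 < cc) :
    (((S / V) ^ ((p+1)/p) * vv / cc) ^ (1/(p+1))) ^ (-p) * vv
      = (V / S) * (cc ^ p * vv) ^ (1/(p+1)) := by
  have hp1 : (0:ℝ) < p + 1 := by linarith
  have hq : 0 < (S/V) ^ ((p+1)/p) := Real.rpow_pos_of_pos (div_pos hS hV) _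
  have hb : 0 < (S / V) ^ ((p+1)/p) * vv / cc := by positivity
  apply rpow_log_eq (by positivity) (by positivity)
  rw [Real.log_mul (Real.rpow_pos_of_pos (Real.rpow_pos_of_pos hb _) _).ne' hvv.ne',
      Real.log_rpow (Real.rpow_pos_of_pos hb _), Real.log_rpow hb,
      Real.log_div (mul_pos hq hvv).ne' hcc.ne', Real.log_mul hq.ne' hvv.ne',
      Real.log_rpow (div_pos hS hV), Real.log_div hS.ne' hV.ne',
      Real.log_mul (div_pos hV hS).ne'
        (Real.rpow_pos_of_pos (mul_pos (Real.rpow_pos_of_pos hcc _) hvv) _).ne',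
      Real.log_div hV.ne' hS.ne',
      Real.log_rpow (mul_pos (Real.rpow_pos_of_pos hcc _) hvv),
      Real.log_mul (Real.rpow_pos_of_pos hcc _).ne' hvv.ne', Real.log_rpow hcc]
  field_simp
  ring

private lemma keyB {p S V vv cc : ℝ} (hp : 0 < p) (hS : 0 < S) (hV : 0 < V)
    (hvv : 0 < vv) (hcc : 0 < cc) :
    ((S / V) ^ ((p+1)/p) * vv / cc) ^ (1/(p+1)) * cc
      = (V ^ (-1/p) * S ^ (1/p)) * (cc ^ p * vv) ^ (1/(p+1)) := by
  have hp1 : (0:ℝ) < p + 1 := by linarith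
  have hq : 0 < (S/V) ^ ((p+1)/p) := Real.rpow_pos_of_pos (div_pos hS hV) _
  have hb : 0 < (S / V) ^ ((p+1)/p) * vv / cc := by positivity
  apply rpow_log_eq (by positivity) (by positivity)
  rw [Real.log_mul (Real.rpow_pos_of_pos hb _).ne' hcc.ne', Real.log_rpow hb,
      Real.log_div (mul_pos hq hvv).ne' hcc.ne', Real.log_mul hq.ne' hvv.ne',
      Real.log_rpow (div_pos hS hV), Real.log_div hS.ne' hV.ne',
      Real.log_mul (mul_pos (Real.rpow_pos_of_pos hV _) (Real.rpow_pos_of_pos hS _)).ne'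
        (Real.rpow_pos_of_pos (mul_pos (Real.rpow_pos_of_pos hcc _) hvv) _).ne',
      Real.log_mul (Real.rpow_pos_of_pos hV _).ne' (Real.rpow_pos_of_pos hS _).ne',
      Real.log_rpow hV, Real.log_rpow hS,
      Real.log_rpow (mul_pos (Real.rpow_pos_of_pos hcc _) hvv),
      Real.log_mul (Real.rpow_pos_of_pos hcc _).ne' hvv.ne', Real.log_rpow hcc]
  field_simp
  ring

private lemma keyC {p S : ℝ} (hp : 0 < p) (hS : 0 < S) :
    S ^ (1/p) * S = S ^ ((p+1)/p) := by
  apply rpow_log_eq (by positivity) (by positivity)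
  rw [Real.log_mul (Real.rpow_pos_of_pos hS _).ne' hS.ne', Real.log_rpow hS, Real.log_rpow hS]
  field_simp
  ring

private lemma keyD {p m vv cc : ℝ} (hp : 0 < p) (hm : 0 < m) (hvv : 0 < vv) (hcc : 0 < cc) :
    (m * cc) ^ (p/(p+1)) * (m ^ (-p) * vv) ^ (1/(p+1)) = (cc ^ p * vv) ^ (1/(p+1)) := by
  have hp1 : (0:ℝ) < p + 1 := by linarith
  apply rpow_log_eq (by positivity) (by positivity)
  rw [Real.log_mul (Real.rpow_pos_of_pos (mul_pos hm hcc) _).ne'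
        (Real.rpow_pos_of_pos (mul_pos (Real.rpow_pos_of_pos hm _) hvv) _).ne',
      Real.log_rpow (mul_pos hm hcc), Real.log_mul hm.ne' hcc.ne',
      Real.log_rpow (mul_pos (Real.rpow_pos_of_pos hm _) hvv),
      Real.log_mul (Real.rpow_pos_of_pos hm _).ne' hvv.ne', Real.log_rpow hm,
      Real.log_rpow (mul_pos (Real.rpow_pos_of_pos hcc _) hvv),
      Real.log_mul (Real.rpow_pos_of_pos hcc _).ne' hvv.ne', Real.log_rpow hcc]
  field_simp
  ring

private lemma keyE {p A V : ℝ} (hp : 0 < p) (hA : 0 < A) (hV : 0 < V) :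
    (A ^ (p/(p+1)) * V ^ (1/(p+1))) ^ ((p+1)/p) = A * V ^ (1/p) := by
  have hp1 : (0:ℝ) < p + 1 := by linarith
  apply rpow_log_eq (by positivity) (by positivity)
  rw [Real.log_rpow (mul_pos (Real.rpow_pos_of_pos hA _) (Real.rpow_pos_of_pos hV _)),
      Real.log_mul (Real.rpow_pos_of_pos hA _).ne' (Real.rpow_pos_of_pos hV _).ne',
      Real.log_rpow hA, Real.log_rpow hV,
      Real.log_mul hA.ne' (Real.rpow_pos_of_pos hV _).ne', Real.log_rpow hV]
  field_simp

theorem stmt_6 (L : ℕ) (p V : ℝ) (hp : 0 < p) (hV : 0 < V)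
    (v c : ℕ → ℝ) (hv : ∀ ℓ ≤ L, 0 < v ℓ) (hc : ∀ ℓ ≤ L, 0 < c ℓ) :
    ∃ lam : ℝ, 0 < lam ∧
      let N : ℕ → ℝ := fun ℓ => (lam * p * v ℓ / c ℓ) ^ (1 / (p + 1))
      (∑ ℓ ∈ Finset.range (L + 1), (N ℓ) ^ (-p) * v ℓ ≤ V) ∧
      (∑ ℓ ∈ Finset.range (L + 1), N ℓ * c ℓ =
        V ^ (-1 / p) *
          (∑ ℓ ∈ Finset.range (L + 1), (c ℓ ^ p * v ℓ) ^ (1 / (p + 1))) ^ ((p + 1) / p)) ∧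
      ∀ M : ℕ → ℝ, (∀ ℓ ≤ L, 0 < M ℓ) →
        (∑ ℓ ∈ Finset.range (L + 1), (M ℓ) ^ (-p) * v ℓ ≤ V) →
        ∑ ℓ ∈ Finset.range (L + 1), N ℓ * c ℓ ≤
          ∑ ℓ ∈ Finset.range (L + 1), M ℓ * c ℓ := by
  have hp1 : (0:ℝ) < p + 1 := by linarith
  set S := ∑ ℓ ∈ Finset.range (L + 1), (c ℓ ^ p * v ℓ) ^ (1 / (p + 1)) with hSdef
  have hS0 : 0 < S := Finset.sum_pos (fun ℓ hℓ => by
      have hℓ' := Finset.mem_range_succ_iff.mp hℓ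
      have h1 := hv ℓ hℓ'; have h2 := hc ℓ hℓ'; positivity)
    ⟨0, Finset.mem_range.mpr (Nat.succ_pos L)⟩
  set lam := (S / V) ^ ((p+1)/p) / p with hlamdef
  have hlam0 : 0 < lam := by positivity
  have hlp : lam * p = (S / V) ^ ((p+1)/p) := by
    rw [hlamdef]; field_simp
  set N : ℕ → ℝ := fun ℓ => (lam * p * v ℓ / c ℓ) ^ (1 / (p + 1)) with hNdef
  have hNval : ∀ ℓ, N ℓ = ((S / V) ^ ((p+1)/p) * v ℓ / c ℓ) ^ (1 / (p + 1)) := by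
    intro ℓ; simp only [hNdef]; rw [hlp]
  have hvar : ∑ ℓ ∈ Finset.range (L + 1), (N ℓ) ^ (-p) * v ℓ = V := by
    have step : ∀ ℓ ∈ Finset.range (L + 1),
        (N ℓ) ^ (-p) * v ℓ = (V / S) * (c ℓ ^ p * v ℓ) ^ (1/(p+1)) := by
      intro ℓ hℓ
      have hℓ' := Finset.mem_range_succ_iff.mp hℓ
      rw [hNval ℓ]
      exact keyA hp hS0 hV (hv ℓ hℓ') (hc ℓ hℓ')
    rw [Finset.sum_congr rfl step, ← Finset.mul_sum, ← hSdef, div_mul_cancel₀ V hS0.ne']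
  have hcost : ∑ ℓ ∈ Finset.range (L + 1), N ℓ * c ℓ = V ^ (-1/p) * S ^ ((p+1)/p) := by
    have step : ∀ ℓ ∈ Finset.range (L + 1),
        N ℓ * c ℓ = (V ^ (-1/p) * S ^ (1/p)) * (c ℓ ^ p * v ℓ) ^ (1/(p+1)) := by
      intro ℓ hℓ
      have hℓ' := Finset.mem_range_succ_iff.mp hℓ
      rw [hNval ℓ]
      exact keyB hp hS0 hV (hv ℓ hℓ') (hc ℓ hℓ')
    rw [Finset.sum_congr rfl step, ← Finset.mul_sum, ← hSdef, mul_assoc, keyC hp hS0]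
  refine ⟨lam, hlam0, hvar.le, hcost, ?_⟩
  intro M hM hMV
  show ∑ ℓ ∈ Finset.range (L + 1), N ℓ * c ℓ ≤ ∑ ℓ ∈ Finset.range (L + 1), M ℓ * c ℓ
  rw [hcost]
  set A := ∑ ℓ ∈ Finset.range (L + 1), M ℓ * c ℓ with hAdef
  have hA0 : 0 < A := Finset.sum_pos (fun ℓ hℓ => by
      have hℓ' := Finset.mem_range_succ_iff.mp hℓ
      exact mul_pos (hM ℓ hℓ') (hc ℓ hℓ'))
    ⟨0, Finset.mem_range.mpr (Nat.succ_pos L)⟩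
  have hB0 : (0:ℝ) ≤ ∑ ℓ ∈ Finset.range (L + 1), (M ℓ) ^ (-p) * v ℓ :=
    Finset.sum_nonneg (fun ℓ hℓ => by
      have hℓ' := Finset.mem_range_succ_iff.mp hℓ
      have h1 := hM ℓ hℓ'; have h2 := hv ℓ hℓ'; positivity)
  have hconj : Real.HolderConjugate ((p+1)/p) (p+1) := by
    rw [Real.holderConjugate_iff]
    constructor
    · rw [lt_div_iff₀ hp]; linarith
    · rw [inv_div]; field_simp
  have hold := Real.inner_le_Lp_mul_Lq_of_nonneg (s := Finset.range (L+1))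
      (f := fun ℓ => (M ℓ * c ℓ) ^ (p/(p+1)))
      (g := fun ℓ => ((M ℓ) ^ (-p) * v ℓ) ^ (1/(p+1))) hconj
      (fun i hi => Real.rpow_nonneg
        (mul_pos (hM i (Finset.mem_range_succ_iff.mp hi))
          (hc i (Finset.mem_range_succ_iff.mp hi))).le _)
      (fun i hi => Real.rpow_nonneg
        (mul_pos (Real.rpow_pos_of_pos (hM i (Finset.mem_range_succ_iff.mp hi)) _)
          (hv i (Finset.mem_range_succ_iff.mp hi))).le _)
  beta_reduce at hold
  have hPinv : (1:ℝ) / ((p+1)/p) = p/(p+1) := one_div_div _ _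
  have h1 : S ≤ A ^ (p/(p+1)) * (∑ ℓ ∈ Finset.range (L + 1), (M ℓ) ^ (-p) * v ℓ) ^ (1/(p+1)) := by
    calc S = ∑ ℓ ∈ Finset.range (L + 1),
          (M ℓ * c ℓ) ^ (p/(p+1)) * ((M ℓ) ^ (-p) * v ℓ) ^ (1/(p+1)) := by
          rw [hSdef]
          refine Finset.sum_congr rfl (fun ℓ hℓ => ?_)
          have hℓ' := Finset.mem_range_succ_iff.mp hℓ
          exact (keyD hp (hM ℓ hℓ') (hv ℓ hℓ') (hc ℓ hℓ')).symm
      _ ≤ (∑ ℓ ∈ Finset.range (L + 1), ((M ℓ * c ℓ) ^ (p/(p+1))) ^ ((p+1)/p)) ^ (1/((p+1)/p)) *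
            (∑ ℓ ∈ Finset.range (L + 1), (((M ℓ) ^ (-p) * v ℓ) ^ (1/(p+1))) ^ (p+1)) ^ (1/(p+1)) := hold
      _ = A ^ (p/(p+1)) * (∑ ℓ ∈ Finset.range (L + 1), (M ℓ) ^ (-p) * v ℓ) ^ (1/(p+1)) := by
          rw [hPinv, hAdef]
          congr 1
          · congr 1
            refine Finset.sum_congr rfl (fun ℓ hℓ => ?_)
            have hℓ' := Finset.mem_range_succ_iff.mp hℓ
            rw [← Real.rpow_mul (mul_pos (hM ℓ hℓ') (hc ℓ hℓ')).le,
              show p/(p+1) * ((p+1)/p) = 1 by field_simp, Real.rpow_one]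
          · congr 1
            refine Finset.sum_congr rfl (fun ℓ hℓ => ?_)
            have hℓ' := Finset.mem_range_succ_iff.mp hℓ
            rw [← Real.rpow_mul
              (mul_pos (Real.rpow_pos_of_pos (hM ℓ hℓ') _) (hv ℓ hℓ')).le,
              show 1/(p+1) * (p+1) = 1 by field_simp, Real.rpow_one]
  have h2 : S ≤ A ^ (p/(p+1)) * V ^ (1/(p+1)) :=
    h1.trans (mul_le_mul_of_nonneg_left
      (Real.rpow_le_rpow hB0 hMV (by positivity)) (by positivity))
  have h3 : S ^ ((p+1)/p) ≤ A * V ^ (1/p) :=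
    calc S ^ ((p+1)/p) ≤ (A ^ (p/(p+1)) * V ^ (1/(p+1))) ^ ((p+1)/p) :=
          Real.rpow_le_rpow hS0.le h2 (by positivity)
      _ = A * V ^ (1/p) := keyE hp hA0 hV
  have hVV : V ^ (-1/p) * V ^ (1/p) = 1 := by
    rw [← Real.rpow_add hV, show -1/p + 1/p = 0 by ring, Real.rpow_zero]
  calc V ^ (-1/p) * S ^ ((p+1)/p) ≤ V ^ (-1/p) * (A * V ^ (1/p)) :=
        mul_le_mul_of_nonneg_left h3 (by positivity)
    _ = A := by rw [mul_comm A, ← mul_assoc, hVV, one_mul]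
end

section
/- Let $p > 0$, $V > 0$, and $v_\ell, c_\ell > 0$ for $\ell = 0, \dots, L$. Then for all positive reals $N_0, \dots, N_L$ with $\sum_{\ell=0}^L N_\ell^{-p} v_\ell \le V$, the cost satisfies the lower bound $\sum_{\ell=0}^L N_\ell c_\ell \ge V^{-1/p} \left( \sum_{\ell=0}^L (c_\ell^p v_\ell)^{1/(p+1)} \right)^{(p+1)/p}$. -/
open Finset

theorem stmt_7 (L : ℕ) (p V : ℝ) (hp : 0 < p) (hV : 0 < V)
    (v c : ℕ → ℝ) (hv : ∀ ℓ ≤ L, 0 < v ℓ) (hc : ∀ ℓ ≤ L, 0 < c ℓ)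
    (N : ℕ → ℝ) (hN : ∀ ℓ ≤ L, 0 < N ℓ)
    (hvar : ∑ ℓ ∈ Finset.range (L + 1), (N ℓ) ^ (-p) * v ℓ ≤ V) :
    V ^ (-1 / p) *
        (∑ ℓ ∈ Finset.range (L + 1), (c ℓ ^ p * v ℓ) ^ (1 / (p + 1))) ^ ((p + 1) / p) ≤
      ∑ ℓ ∈ Finset.range (L + 1), N ℓ * c ℓ := by
  have hp1 : (0:ℝ) < p + 1 := by linarith
  have hq : Real.HolderConjugate ((p+1)/p) (p+1) := by
    constructor
    · rw [inv_div, inv_one, ← one_div, ← add_div, div_self hp1.ne']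
    · positivity
    · linarith
  set s := Finset.range (L+1) with hs
  have hmem : ∀ ℓ ∈ s, ℓ ≤ L := fun ℓ hℓ => Nat.lt_succ_iff.mp (Finset.mem_range.mp hℓ)
  have key := Real.inner_le_Lp_mul_Lq s (fun ℓ => (N ℓ * c ℓ) ^ (p/(p+1)))
      (fun ℓ => ((N ℓ) ^ (-p) * v ℓ) ^ (1/(p+1))) hq
  have eS : ∑ ℓ ∈ s, (N ℓ * c ℓ) ^ (p/(p+1)) * ((N ℓ) ^ (-p) * v ℓ) ^ (1/(p+1))
      = ∑ ℓ ∈ s, (c ℓ ^ p * v ℓ) ^ (1 / (p + 1)) := by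
    refine Finset.sum_congr rfl fun ℓ hℓ => ?_
    have hNℓ := hN ℓ (hmem ℓ hℓ); have hcℓ := hc ℓ (hmem ℓ hℓ); have hvℓ := hv ℓ (hmem ℓ hℓ)
    have h1 : (N ℓ * c ℓ) ^ (p/(p+1)) = N ℓ ^ (p/(p+1)) * c ℓ ^ (p/(p+1)) :=
      Real.mul_rpow hNℓ.le hcℓ.le
    have h2 : ((N ℓ)^(-p) * v ℓ)^(1/(p+1)) = N ℓ ^ (-(p/(p+1))) * v ℓ ^ (1/(p+1)) := by
      rw [Real.mul_rpow (Real.rpow_pos_of_pos hNℓ _).le hvℓ.le, ← Real.rpow_mul hNℓ.le]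
      ring_nf
    have h3 : (c ℓ^p * v ℓ)^(1/(p+1)) = c ℓ ^ (p/(p+1)) * v ℓ ^ (1/(p+1)) := by
      rw [Real.mul_rpow (Real.rpow_pos_of_pos hcℓ _).le hvℓ.le, ← Real.rpow_mul hcℓ.le]
      ring_nf
    rw [h1, h2, h3, mul_mul_mul_comm, ← Real.rpow_add hNℓ, add_neg_cancel, Real.rpow_zero,
        one_mul]
  have eF : ∑ ℓ ∈ s, |(N ℓ * c ℓ) ^ (p/(p+1))| ^ ((p+1)/p) = ∑ ℓ ∈ s, N ℓ * c ℓ := by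
    refine Finset.sum_congr rfl fun ℓ hℓ => ?_
    have hpos : (0:ℝ) < N ℓ * c ℓ := mul_pos (hN ℓ (hmem ℓ hℓ)) (hc ℓ (hmem ℓ hℓ))
    rw [abs_of_nonneg (Real.rpow_nonneg hpos.le _), ← Real.rpow_mul hpos.le,
        show p/(p+1) * ((p+1)/p) = 1 by field_simp, Real.rpow_one]
  have eG : ∑ ℓ ∈ s, |((N ℓ) ^ (-p) * v ℓ) ^ (1/(p+1))| ^ (p+1) = ∑ ℓ ∈ s, (N ℓ)^(-p) * v ℓ := by
    refine Finset.sum_congr rfl fun ℓ hℓ => ?_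
    have hpos : (0:ℝ) < (N ℓ)^(-p) * v ℓ :=
      mul_pos (Real.rpow_pos_of_pos (hN ℓ (hmem ℓ hℓ)) _) (hv ℓ (hmem ℓ hℓ))
    rw [abs_of_nonneg (Real.rpow_nonneg hpos.le _), ← Real.rpow_mul hpos.le,
        one_div_mul_cancel hp1.ne', Real.rpow_one]
  rw [eS, eF, eG] at key
  have hT : (0:ℝ) < ∑ ℓ ∈ s, N ℓ * c ℓ := by
      apply Finset.sum_pos (fun ℓ hℓ => mul_pos (hN ℓ (hmem ℓ hℓ)) (hc ℓ (hmem ℓ hℓ)))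
      exact ⟨0, Finset.mem_range.mpr (Nat.succ_pos L)⟩
  have hS : (0:ℝ) ≤ ∑ ℓ ∈ s, (c ℓ ^ p * v ℓ) ^ (1 / (p + 1)) :=
    Finset.sum_nonneg fun ℓ hℓ => Real.rpow_nonneg
      (mul_pos (Real.rpow_pos_of_pos (hc ℓ (hmem ℓ hℓ)) _) (hv ℓ (hmem ℓ hℓ))).le _
  rw [one_div_div] at key
  have hW : (∑ ℓ ∈ s, (N ℓ)^(-p) * v ℓ) ^ (1/(p+1)) ≤ V ^ (1/(p+1)) :=
    Real.rpow_le_rpow (Finset.sum_nonneg fun ℓ hℓ => (mul_pos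
      (Real.rpow_pos_of_pos (hN ℓ (hmem ℓ hℓ)) _) (hv ℓ (hmem ℓ hℓ))).le) hvar
      (by positivity)
  have key2 : (∑ ℓ ∈ s, (c ℓ ^ p * v ℓ) ^ (1 / (p + 1))) ≤
      (∑ ℓ ∈ s, N ℓ * c ℓ) ^ (p/(p+1)) * V ^ (1/(p+1)) :=
    key.trans (mul_le_mul_of_nonneg_left hW (Real.rpow_nonneg hT.le _))
  have key3 := Real.rpow_le_rpow hS key2 (by positivity : (0:ℝ) ≤ (p+1)/p)
  rw [Real.mul_rpow (Real.rpow_nonneg hT.le _) (Real.rpow_nonneg hV.le _),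
      ← Real.rpow_mul hT.le, ← Real.rpow_mul hV.le,
      show p/(p+1) * ((p+1)/p) = 1 by field_simp,
      show 1/(p+1) * ((p+1)/p) = 1/p by field_simp,
      Real.rpow_one] at key3
  calc V ^ (-1 / p) * (∑ ℓ ∈ s, (c ℓ ^ p * v ℓ) ^ (1 / (p + 1))) ^ ((p + 1) / p)
      ≤ V ^ (-1 / p) * ((∑ ℓ ∈ s, N ℓ * c ℓ) * V ^ (1/p)) :=
        mul_le_mul_of_nonneg_left key3 (Real.rpow_nonneg hV.le _)
    _ = (∑ ℓ ∈ s, N ℓ * c ℓ) * (V ^ (-1/p) * V ^ (1/p)) := by ring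
    _ = ∑ ℓ ∈ s, N ℓ * c ℓ := by
        rw [← Real.rpow_add hV, show -1/p + 1/p = 0 by ring, Real.rpow_zero, mul_one]
end
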